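/- arXiv:2004.01068 — 7 statements merged into one kernel-verified Lean document; each statement's English description precedes it below -/
import Mathlib

section
/- Let A be a unital associative ℂ-algebra whose dimension as a ℂ-vector space is at most countable, and let J be a primitive two-sided ideal of A. Then the center of the quotient algebra A/J consists of scalars: for every z ∈ A whose image in A/J commutes with the image of every element of A, there exists c ∈ ℂ such that z − c·1 ∈ J. -/
open Cardinal

/-- **Schur-type lemma.**  Let `A` be a unital associative `ℂ`-algebra of at most countable
dimension as a `ℂ`-vector space and let `J` be a primitive two-sided ideal of `A`, i.e. the
annihilator `J = Ann M` of a simple left `A`-module `M`.  Then the center of `A ⧸ J` consists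
of scalars: every `z ∈ A` whose image in `A ⧸ J` commutes with the image of every element of
`A` is congruent to a scalar `c • 1` modulo `J`. -/
theorem center_quotient_primitive_eq_scalars_of_countable_dimension
    (A : Type) [Ring A] [Algebra ℂ A]
    (hcount : ∃ s : Set A, s.Countable ∧ Submodule.span ℂ s = ⊤)
    (M : Type) [AddCommGroup M] [Module A M] [IsSimpleModule A M]
    (z : A) (hz : ∀ a : A, z * a - a * z ∈ Module.annihilator A M) :
    ∃ c : ℂ, z - algebraMap ℂ A c ∈ Module.annihilator A M := by
  classical
  obtain ⟨s, hs_count, hs_span⟩ := hcount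
  -- ℂ-module structure on M
  letI : Module ℂ M := Module.compHom M (algebraMap ℂ A)
  haveI : IsScalarTower ℂ A M := ⟨fun c a m => by
    show ((c • a) : A) • m = (algebraMap ℂ A c) • a • m
    rw [Algebra.smul_def, mul_smul]⟩
  haveI : SMulCommClass A ℂ M := ⟨fun a c m => by
    show a • (algebraMap ℂ A c) • m = (algebraMap ℂ A c) • a • m
    rw [← mul_smul, ← mul_smul, Algebra.commutes]⟩
  have hzm : ∀ (a : A) (m : M), (z * a) • m = (a * z) • m := by
    intro a m
    have h := Module.mem_annihilator.mp (hz a) m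
    rw [sub_smul, sub_eq_zero] at h
    exact h
  -- the action of z as an A-endomorphism of M
  letI : DivisionRing (Module.End A M) := Module.End.instDivisionRing
  let φ : Module.End A M :=
    { toFun := fun m => z • m
      map_add' := smul_add z
      map_smul' := fun a m => by
        show z • a • m = a • z • m
        rw [← mul_smul, ← mul_smul, hzm] }
  -- the double centralizer of φ is a commutative subfield of End A M
  have hS_comm : ∀ x y : Module.End A M,
      x ∈ Subring.centralizer ((Subring.centralizer ({φ} : Set (Module.End A M)) : Subring _) :
        Set (Module.End A M)) →
      y ∈ Subring.centralizer ((Subring.centralizer ({φ} : Set (Module.End A M)) : Subring _) :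
        Set (Module.End A M)) → x * y = y * x := by
    intro x y hx hy
    have hyφ : y ∈ Subring.centralizer ({φ} : Set (Module.End A M)) := by
      refine Subring.mem_centralizer_iff.mpr ?_
      rintro g rfl
      exact hy φ (Subring.mem_centralizer_iff.mpr (by rintro g rfl; rfl))
    exact (hx y hyφ).symm
  let E : Subfield (Module.End A M) :=
    { toSubring := Subring.centralizer ((Subring.centralizer ({φ} : Set (Module.End A M)) :
        Subring _) : Set (Module.End A M))
      inv_mem' := by
        intro x hx
        rcases eq_or_ne x 0 with rfl | hx0
        · simp only [inv_zero]; exact (Subring.centralizer _).zero_mem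
        refine Subring.mem_centralizer_iff.mpr fun g hg => ?_
        have h := hx g hg
        have h1 := congrArg (fun t => x⁻¹ * t * x⁻¹) h
        have h2 : x⁻¹ * g = g * x⁻¹ := by
          simpa [mul_assoc, inv_mul_cancel_left₀ hx0, mul_inv_cancel₀ hx0] using h1
        exact h2.symm }
  letI : Field E :=
    { (inferInstance : DivisionRing E) with
      mul_comm := fun x y => Subtype.ext (hS_comm _ _ x.2 y.2) }
  letI : Algebra ℂ E :=
    ((algebraMap ℂ (Module.End A M)).codRestrict E.toSubring (fun c =>
      Subring.mem_centralizer_iff.mpr fun g _ => (Algebra.commutes c g).symm)).toAlgebra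
  have hφE : φ ∈ E := Subring.mem_centralizer_iff.mpr fun g hg =>
    (Subring.mem_centralizer_iff.mp hg φ rfl).symm
  let x : E := ⟨φ, hφE⟩
  -- M has countable dimension over ℂ
  haveI : Nontrivial M := IsSimpleModule.nontrivial A M
  obtain ⟨m₀, hm₀⟩ := exists_ne (0 : M)
  have hspan : Submodule.span A ({m₀} : Set M) = ⊤ := by
    rcases eq_bot_or_eq_top (Submodule.span A ({m₀} : Set M)) with h | h
    · exact absurd (h ▸ Submodule.mem_span_singleton_self m₀) (by simp [hm₀])
    · exact h
  have hrankM : Module.rank ℂ M ≤ ℵ₀ := by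
    have hT : Submodule.span ℂ ((fun a : A => a • m₀) '' s) = ⊤ := by
      rw [Submodule.eq_top_iff']
      intro m
      obtain ⟨a, ha⟩ := (Submodule.mem_span_singleton).mp (hspan ▸ Submodule.mem_top (x := m))
      have haA : a ∈ Submodule.span ℂ s := hs_span ▸ Submodule.mem_top
      have : a • m₀ ∈ Submodule.span ℂ ((fun a : A => a • m₀) '' s) := by
        refine Submodule.span_induction (p := fun a _ =>
            a • m₀ ∈ Submodule.span ℂ ((fun a : A => a • m₀) '' s)) ?_ ?_ ?_ ?_ haA
        · intro b hb; exact Submodule.subset_span ⟨b, hb, rfl⟩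
        · simp
        · intro b c _ _ hb hc; rw [add_smul]; exact Submodule.add_mem _ hb hc
        · intro c b _ hb
          rw [smul_assoc]
          exact Submodule.smul_mem _ c hb
      rwa [ha] at this
    calc Module.rank ℂ M = Module.rank ℂ (⊤ : Submodule ℂ M) := (rank_top ℂ M).symm
      _ = Module.rank ℂ (Submodule.span ℂ ((fun a : A => a • m₀) '' s)) := by rw [hT]
      _ ≤ #((fun a : A => a • m₀) '' s) := rank_span_le _
      _ ≤ #s := Cardinal.mk_image_le
      _ ≤ ℵ₀ := hs_count.le_aleph0
  -- x is algebraic over ℂ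
  have hx : IsAlgebraic ℂ x := by
    by_contra hx
    have H : Transcendental ℂ x := hx
    have li := H.linearIndependent_sub_inv
    -- evaluation at m₀ is an injective ℂ-linear map E → M
    let f : E →ₗ[ℂ] M :=
      { toFun := fun y => (y : Module.End A M) m₀
        map_add' := fun y y' => rfl
        map_smul' := fun c y => by
          show ((algebraMap ℂ (Module.End A M) c) * (y : Module.End A M)) m₀ = c • _
          rw [Module.End.mul_apply, Module.algebraMap_end_apply] }
    have hfinj : Function.Injective f := by
      intro y y' h
      have h0 : ((y - y' : E) : Module.End A M) m₀ = 0 := by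
        show (y : Module.End A M) m₀ - (y' : Module.End A M) m₀ = 0
        rw [sub_eq_zero]; exact h
      by_contra hne
      have hne' : ((y - y' : E) : Module.End A M) ≠ 0 := by
        intro hc
        exact hne (sub_eq_zero.mp (Subtype.ext hc))
      exact hm₀ ((LinearMap.bijective_of_ne_zero hne').injective
        (by rw [h0, map_zero]))
    have li2 : LinearIndependent ℂ (f ∘ fun c : ℂ => (x - algebraMap ℂ E c)⁻¹) :=
      li.map' f (LinearMap.ker_eq_bot.mpr hfinj)
    have h1 : #ℂ ≤ Module.rank ℂ M := li2.cardinal_le_rank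
    rw [mk_complex] at h1
    exact absurd (h1.trans hrankM) (by simpa using Cardinal.aleph0_lt_continuum.not_ge)
  -- since ℂ is algebraically closed, x is a scalar
  have hint : IsIntegral ℂ x := hx.isIntegral
  have hdeg : (minpoly ℂ x).degree = 1 :=
    IsAlgClosed.degree_eq_one_of_irreducible ℂ (minpoly.irreducible hint)
  obtain ⟨c, hc⟩ := minpoly.degree_eq_one_iff.mp hdeg
  refine ⟨c, Module.mem_annihilator.mpr fun m => ?_⟩
  have hφc : φ = algebraMap ℂ (Module.End A M) c := by
    have := congrArg (Subtype.val : E → Module.End A M) hc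
    exact this.symm
  have : z • m = c • m := by
    have := congrFun (congrArg (fun g : Module.End A M => g.toFun) hφc) m
    simpa [φ] using this
  rw [sub_smul, this]
  show (c : ℂ) • m - (algebraMap ℂ A c) • m = 0
  rw [sub_eq_zero]
  rfl
end

section
/- Let A be a unital commutative ℂ-algebra whose dimension as a ℂ-vector space is at most countable, and let M be a maximal ideal of A. Then dim_ℂ(A/M) = 1; equivalently, the composition ℂ → A → A/M is a ℂ-algebra isomorphism, so every element of A is congruent modulo M to a unique scalar. -/
/-- Let `A` be a unital commutative `ℂ`-algebra of at most countable dimension as a `ℂ`-vector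
space, and let `M` be a maximal ideal of `A`.  Then `dim_ℂ (A ⧸ M) = 1`; equivalently, the
composition `ℂ → A → A ⧸ M` is a `ℂ`-algebra isomorphism, so every element of `A` is congruent
modulo `M` to a unique scalar. -/
theorem algebraMap_quotient_maximal_bijective_of_countable_dimension
    (A : Type) [CommRing A] [Algebra ℂ A]
    (hcount : ∃ s : Set A, s.Countable ∧ Submodule.span ℂ s = ⊤)
    (M : Ideal A) (hM : M.IsMaximal) :
    Function.Bijective (algebraMap ℂ (A ⧸ M)) ∧
      ∀ a : A, ∃! c : ℂ, a - algebraMap ℂ A c ∈ M := by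
  classical
  haveI := hM
  letI : Field (A ⧸ M) := Ideal.Quotient.field M
  obtain ⟨s, hs, hspan⟩ := hcount
  -- the quotient has countable rank over ℂ
  have hrank : Module.rank ℂ (A ⧸ M) ≤ Cardinal.aleph0 := by
    have himg : Submodule.span ℂ (⇑(Ideal.Quotient.mkₐ ℂ M) '' s) = ⊤ := by
      have h1 : Submodule.span ℂ (⇑(Ideal.Quotient.mkₐ ℂ M) '' s) =
          Submodule.map (Ideal.Quotient.mkₐ ℂ M).toLinearMap (Submodule.span ℂ s) :=
        by rw [Submodule.map_span, AlgHom.coe_toLinearMap]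
      rw [h1, hspan, Submodule.map_top, LinearMap.range_eq_top]
      exact Ideal.Quotient.mkₐ_surjective ℂ M
    calc Module.rank ℂ (A ⧸ M)
        = Module.rank ℂ (Submodule.span ℂ (⇑(Ideal.Quotient.mkₐ ℂ M) '' s)) := by
          rw [himg]; exact (Submodule.topEquiv.rank_eq).symm
      _ ≤ Cardinal.mk (⇑(Ideal.Quotient.mkₐ ℂ M) '' s) := rank_span_le _
      _ ≤ Cardinal.aleph0 := (hs.image _).le_aleph0
  -- every element of the quotient is algebraic over ℂ
  have halg : ∀ x : A ⧸ M, IsAlgebraic ℂ x := by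
    intro x
    by_contra hx
    have htr : Transcendental ℂ x := hx
    have hli := htr.linearIndependent_sub_inv
    have := hli.cardinal_le_rank
    have : (Cardinal.continuum : Cardinal) ≤ Cardinal.aleph0 := by
      calc (Cardinal.continuum : Cardinal) = Cardinal.mk ℂ := Cardinal.mk_complex.symm
        _ ≤ Module.rank ℂ (A ⧸ M) := this
        _ ≤ Cardinal.aleph0 := hrank
    exact absurd this (not_le.2 Cardinal.aleph0_lt_continuum)
  haveI : Algebra.IsIntegral ℂ (A ⧸ M) := ⟨fun x => (halg x).isIntegral⟩
  have hsurj : Function.Surjective (algebraMap ℂ (A ⧸ M)) :=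
    IsAlgClosed.algebraMap_bijective_of_isIntegral.2
  have hinj : Function.Injective (algebraMap ℂ (A ⧸ M)) :=
    (algebraMap ℂ (A ⧸ M)).injective
  refine ⟨⟨hinj, hsurj⟩, fun a => ?_⟩
  obtain ⟨c, hc⟩ := hsurj (Ideal.Quotient.mk M a)
  have key : ∀ d : ℂ, (a - algebraMap ℂ A d ∈ M ↔ algebraMap ℂ (A ⧸ M) d =
      Ideal.Quotient.mk M a) := by
    intro d
    have habs : algebraMap ℂ (A ⧸ M) d = Ideal.Quotient.mk M (algebraMap ℂ A d) := rfl
    rw [← Ideal.Quotient.eq_zero_iff_mem, map_sub, sub_eq_zero, eq_comm, habs]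
  refine ⟨c, (key c).2 hc, fun d hd => hinj ?_⟩
  rw [(key d).1 hd, hc]
end

section
/- Let (R_n)_{n≥1} be a sequence of nonzero finitely generated commutative unital ℂ-algebras which are integral domains, together with injective ℂ-algebra homomorphisms ι_n : R_n → R_{n+1} for all n ≥ 1. Then there exists a sequence of ℂ-algebra homomorphisms φ_n : R_n → ℂ satisfying φ_{n+1} ∘ ι_n = φ_n for all n ≥ 1. -/
set_option linter.deprecated false

open Cardinal

section ProVarietyAux

variable (R : ℕ → Type) [∀ n, CommRing (R n)] [∀ n, Algebra ℂ (R n)]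
variable (ι : ∀ n, R n →ₐ[ℂ] R (n + 1))

/-- The transition maps of the chain. -/
noncomputable def chainMap (i j : ℕ) (h : i ≤ j) : R i →ₐ[ℂ] R j :=
  Nat.leRecOn h (fun {k} g => (ι k).comp g) (AlgHom.id ℂ (R i))

lemma chainMap_self (i : ℕ) (h : i ≤ i) :
    chainMap R ι i i h = AlgHom.id ℂ (R i) := Nat.leRecOn_self _

lemma chainMap_succ (i j : ℕ) (h : i ≤ j) (h2 : i ≤ j + 1) :
    chainMap R ι i (j + 1) h2 = (ι j).comp (chainMap R ι i j h) :=
  Nat.leRecOn_succ h _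

lemma chainMap_comp (i j k : ℕ) (hij : i ≤ j) (hjk : j ≤ k) :
    chainMap R ι i k (hij.trans hjk) = (chainMap R ι j k hjk).comp (chainMap R ι i j hij) := by
  induction k, hjk using Nat.le_induction with
  | base => rw [chainMap_self, AlgHom.id_comp]
  | succ m hm ih =>
      rw [chainMap_succ R ι i m (hij.trans hm), chainMap_succ R ι j m hm, ih, AlgHom.comp_assoc]

/-- The transition maps as ring homomorphisms. -/
noncomputable def trf (i j : ℕ) (h : i ≤ j) : R i →+* R j := (chainMap R ι i j h).toRingHom

instance : DirectedSystem R (fun i j h => trf R ι i j h) where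
  map_self i x := by
    show chainMap R ι i i le_rfl x = x
    rw [chainMap_self]; rfl
  map_map {k j i} hij hjk x := by
    show chainMap R ι j k hjk (chainMap R ι i j hij x) = chainMap R ι i k (hij.trans hjk) x
    rw [chainMap_comp R ι i j k hij hjk]; rfl

/-- The direct limit of the chain. -/
noncomputable def ChainLimit : Type :=
  Ring.DirectLimit R (fun i j h => trf R ι i j h)

noncomputable instance : CommRing (ChainLimit R ι) := Ring.instCommRingDirectLimit _ _

noncomputable instance : Algebra ℂ (ChainLimit R ι) :=
  ((Ring.DirectLimit.of R (fun i j h => trf R ι i j h) 0).comp (algebraMap ℂ (R 0))).toAlgebra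

/-- The canonical map to the limit, as an algebra hom. -/
noncomputable def chainOf (n : ℕ) : R n →ₐ[ℂ] ChainLimit R ι :=
  { Ring.DirectLimit.of R (fun i j h => trf R ι i j h) n with
    commutes' := fun c => by
      show Ring.DirectLimit.of R (fun i j h => trf R ι i j h) n (algebraMap ℂ (R n) c) =
        Ring.DirectLimit.of R (fun i j h => trf R ι i j h) 0 (algebraMap ℂ (R 0) c)
      have : algebraMap ℂ (R n) c = trf R ι 0 n (Nat.zero_le n) (algebraMap ℂ (R 0) c) :=
        ((chainMap R ι 0 n (Nat.zero_le n)).commutes c).symm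
      rw [this, Ring.DirectLimit.of_f] }

lemma chainOf_apply (n : ℕ) (x : R n) :
    chainOf R ι n x = Ring.DirectLimit.of R (fun i j h => trf R ι i j h) n x := rfl

lemma chainOf_comp (n : ℕ) :
    (chainOf R ι (n + 1)).comp (ι n) = chainOf R ι n := by
  ext x
  show Ring.DirectLimit.of R (fun i j h => trf R ι i j h) (n + 1) (ι n x) =
    Ring.DirectLimit.of R (fun i j h => trf R ι i j h) n x
  have : ι n x = trf R ι n (n + 1) (Nat.le_succ n) x := by
    show ι n x = chainMap R ι n (n + 1) (Nat.le_succ n) x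
    rw [chainMap_succ R ι n n le_rfl, chainMap_self]
    rfl
  rw [this, Ring.DirectLimit.of_f]

lemma chainMap_injective (hι : ∀ n, Function.Injective (ι n)) (i j : ℕ) (h : i ≤ j) :
    Function.Injective (trf R ι i j h) := by
  induction j, h using Nat.le_induction with
  | base =>
      show Function.Injective (chainMap R ι i i le_rfl)
      rw [chainMap_self]; exact fun a b hab => hab
  | succ m hm ih =>
      show Function.Injective (chainMap R ι i (m + 1) (hm.trans (Nat.le_succ m)))
      rw [chainMap_succ R ι i m hm]
      exact (hι m).comp ih

lemma chainLimit_nontrivial [Nontrivial (R 0)] (hι : ∀ n, Function.Injective (ι n)) :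
    Nontrivial (ChainLimit R ι) := by
  have hinj := Ring.DirectLimit.of_injective (f' := trf R ι)
    (chainMap_injective R ι hι) 0
  refine ⟨0, 1, fun h => ?_⟩
  have : (Ring.DirectLimit.of R (fun i j h => trf R ι i j h) 0) 0 =
      (Ring.DirectLimit.of R (fun i j h => trf R ι i j h) 0) 1 := by
    rw [map_zero, map_one]; exact h
  exact zero_ne_one (hinj this)

lemma rank_le_aleph0 [∀ n, Algebra.FiniteType ℂ (R n)] :
    Module.rank ℂ (ChainLimit R ι) ≤ ℵ₀ := by
  have hR : ∀ n, Module.rank ℂ (R n) ≤ ℵ₀ := by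
    intro n
    obtain ⟨k, f, hf⟩ := Algebra.FiniteType.iff_quotient_mvPolynomial''.mp
      (inferInstance : Algebra.FiniteType ℂ (R n))
    refine le_trans (f.toLinearMap.rank_le_of_surjective hf) ?_
    rw [← (MvPolynomial.basisMonomials (Fin k) ℂ).mk_eq_rank'']
    exact Cardinal.mk_le_aleph0
  have hsurj : Function.Surjective
      (DirectSum.toModule ℂ ℕ (ChainLimit R ι) (fun n => (chainOf R ι n).toLinearMap)) := by
    intro z
    obtain ⟨n, x, hx⟩ := Ring.DirectLimit.exists_of z
    refine ⟨DirectSum.lof ℂ ℕ R n x, ?_⟩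
    rw [DirectSum.toModule_lof]
    exact hx
  refine le_trans (LinearMap.rank_le_of_surjective _ hsurj) ?_
  rw [rank_directSum]
  calc (Cardinal.sum fun n => Module.rank ℂ (R n)) ≤ Cardinal.sum fun _ : ℕ => ℵ₀ :=
        Cardinal.sum_le_sum _ _ hR
    _ = #ℕ * ℵ₀ := Cardinal.sum_const' _ _
    _ = ℵ₀ := by simp

end ProVarietyAux

/-- **A pro-variety has a point.**
Let `(R n)` be a sequence of nonzero finitely generated commutative unital `ℂ`-algebras which
are integral domains, together with injective `ℂ`-algebra homomorphisms `ι n : R n → R (n+1)`.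
Then there exists a compatible sequence of `ℂ`-algebra homomorphisms `φ n : R n → ℂ`. -/
theorem exists_compatible_points_of_chain_of_domains
    (R : ℕ → Type) [∀ n, CommRing (R n)] [∀ n, Algebra ℂ (R n)]
    [∀ n, IsDomain (R n)] [∀ n, Algebra.FiniteType ℂ (R n)]
    (ι : ∀ n, R n →ₐ[ℂ] R (n + 1)) (hι : ∀ n, Function.Injective (ι n)) :
    ∃ φ : ∀ n, R n →ₐ[ℂ] ℂ, ∀ n, (φ (n + 1)).comp (ι n) = φ n := by
  haveI := chainLimit_nontrivial R ι hι
  obtain ⟨m, hm⟩ := Ideal.exists_maximal (ChainLimit R ι)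
  haveI := hm
  letI : Field (ChainLimit R ι ⧸ m) := Ideal.Quotient.field m
  have hrank : Module.rank ℂ (ChainLimit R ι ⧸ m) ≤ ℵ₀ := by
    refine le_trans ((Ideal.Quotient.mkₐ ℂ m).toLinearMap.rank_le_of_surjective ?_)
      (rank_le_aleph0 R ι)
    exact Ideal.Quotient.mk_surjective
  haveI : Algebra.IsAlgebraic ℂ (ChainLimit R ι ⧸ m) := by
    refine ⟨fun x => ?_⟩
    by_contra hx
    have hli := (Transcendental.linearIndependent_sub_inv (F := ℂ) (x := x) hx)
    have := hli.cardinal_le_rank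
    rw [mk_complex] at this
    exact absurd (this.trans hrank) (not_le.mpr (Cardinal.aleph0_lt_continuum))
  have hsurj : Function.Surjective (algebraMap ℂ (ChainLimit R ι ⧸ m)) :=
    IsAlgClosed.algebraMap_bijective_of_isIntegral.2
  have hbij : Function.Bijective (Algebra.ofId ℂ (ChainLimit R ι ⧸ m)) :=
    ⟨(algebraMap ℂ (ChainLimit R ι ⧸ m)).injective, hsurj⟩
  let e := AlgEquiv.ofBijective (Algebra.ofId ℂ (ChainLimit R ι ⧸ m)) hbij
  refine ⟨fun n => (e.symm.toAlgHom.comp (Ideal.Quotient.mkₐ ℂ m)).comp (chainOf R ι n),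
    fun n => ?_⟩
  rw [AlgHom.comp_assoc, chainOf_comp]
end

section
/- Let σ be a countable type and let (f_n)_{n ∈ ℕ} be a countable family of nonzero polynomials in the multivariate polynomial ring ℂ[X_s : s ∈ σ] over ℂ. Then there exists a point λ : σ → ℂ such that the evaluation of f_n at λ is nonzero for every n ∈ ℕ. -/
open MvPolynomial

/-- A nonzero multivariate polynomial over `ℂ` does not vanish identically on any
nonempty open subset of `σ → ℂ` (product topology). -/
lemma aux_dense_nonvanishing (σ : Type) (p : MvPolynomial σ ℂ) (hp : p ≠ 0) :
    Dense {x : σ → ℂ | MvPolynomial.eval x p ≠ 0} := by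
  rw [dense_iff_inter_open]
  intro U hU ⟨x0, hx0⟩
  by_contra h
  have hvanish : ∀ x ∈ U, MvPolynomial.eval x p = 0 := by
    intro x hx
    by_contra hx'
    exact h ⟨x, hx, hx'⟩
  -- show p = 0 via lines through x0
  apply hp
  apply MvPolynomial.funext (q := 0)
  intro y
  simp only [map_zero]
  -- the line t ↦ x0 + t • (y - x0)
  set L : ℂ → (σ → ℂ) := fun t s => x0 s + t * (y s - x0 s) with hL
  have hLc : Continuous L := by
    apply continuous_pi
    intro s
    fun_prop
  -- restrict p to the line: a one-variable polynomial
  set g : Polynomial ℂ :=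
    MvPolynomial.aeval (fun s => Polynomial.C (x0 s) + Polynomial.X * Polynomial.C (y s - x0 s)) p
    with hg
  have hgeval : ∀ t : ℂ, Polynomial.eval t g = MvPolynomial.eval (L t) p := by
    intro t
    have := congrFun (congrArg (fun F => F.toFun)
      (MvPolynomial.comp_aeval
        (fun s => Polynomial.C (x0 s) + Polynomial.X * Polynomial.C (y s - x0 s))
        (Polynomial.aeval t : Polynomial ℂ →ₐ[ℂ] ℂ))) p
    simp only [AlgHom.toFun_eq_coe, AlgHom.coe_comp, Function.comp_apply] at this
    have h2 : (Polynomial.aeval t : Polynomial ℂ →ₐ[ℂ] ℂ) g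
        = MvPolynomial.aeval (fun s =>
            (Polynomial.aeval t : Polynomial ℂ →ₐ[ℂ] ℂ)
              (Polynomial.C (x0 s) + Polynomial.X * Polynomial.C (y s - x0 s))) p := this
    simp only [map_add, map_mul, Polynomial.aeval_C, Polynomial.aeval_X,
      Algebra.algebraMap_self, RingHom.id_apply] at h2
    have h3 : MvPolynomial.aeval (fun s => x0 s + t * (y s - x0 s)) p
        = MvPolynomial.eval (L t) p := by
      rw [MvPolynomial.aeval_def, MvPolynomial.eval]
      rfl
    calc Polynomial.eval t g = (Polynomial.aeval t : Polynomial ℂ →ₐ[ℂ] ℂ) g := by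
          rw [Polynomial.coe_aeval_eq_eval]
      _ = _ := by rw [h2, ← h3]
  -- g vanishes on the open set L ⁻¹' U, which contains 0, hence is infinite
  have hT : IsOpen (L ⁻¹' U) := hU.preimage hLc
  have h0 : (0 : ℂ) ∈ L ⁻¹' U := by
    simpa [hL, _root_.funext_iff] using hx0
  have hinf : {t : ℂ | g.IsRoot t}.Infinite := by
    apply Set.Infinite.mono (s := L ⁻¹' U)
    · intro t ht
      simp only [Set.mem_setOf_eq, Polynomial.IsRoot, hgeval t]
      exact hvanish _ ht
    · exact infinite_of_mem_nhds (0 : ℂ) (hT.mem_nhds h0)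
  have hg0 : g = 0 := Polynomial.eq_zero_of_infinite_isRoot g hinf
  have := hgeval 1
  rw [hg0] at this
  simp only [Polynomial.eval_zero] at this
  have hLy : L 1 = y := by funext s; simp [hL]
  rw [hLy] at this
  exact this.symm

/-- **Irreducibility of the countable-Zariski topology on the dual space.**
Let `σ` be a countable type and let `(f_n)` be a countable family of nonzero polynomials in
`ℂ[X_s : s ∈ σ]`.  Then there exists a point `λ : σ → ℂ` at which every `f_n` is nonzero. -/
theorem exists_point_nonvanishing_of_countable_family
    (σ : Type) [Countable σ] (f : ℕ → MvPolynomial σ ℂ) (hf : ∀ n, f n ≠ 0) :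
    ∃ lam : σ → ℂ, ∀ n, MvPolynomial.eval lam (f n) ≠ 0 := by
  have hopen : ∀ n, IsOpen {x : σ → ℂ | MvPolynomial.eval x (f n) ≠ 0} := fun n =>
    isOpen_ne.preimage (MvPolynomial.continuous_eval (f n))
  have hdense : ∀ n, Dense {x : σ → ℂ | MvPolynomial.eval x (f n) ≠ 0} := fun n =>
    aux_dense_nonvanishing σ (f n) (hf n)
  have := dense_iInter_of_isOpen hopen hdense
  obtain ⟨lam, hlam⟩ := this.nonempty
  exact ⟨lam, fun n => Set.mem_iInter.mp hlam n⟩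
end

section
/- Let A be a nonzero commutative unital ℂ-algebra of at most countable dimension over ℂ which is an integral domain, and let (f_n)_{n ∈ ℕ} be a countable family of nonzero elements of A. Then there exists a ℂ-algebra homomorphism φ : A → ℂ such that φ(f_n) ≠ 0 for all n ∈ ℕ. -/
open Cardinal

/-- Let `A` be a nonzero commutative unital `ℂ`-algebra of at most countable dimension over `ℂ`
which is an integral domain, and let `(f_n)` be a countable family of nonzero elements of `A`.
Then there exists a `ℂ`-algebra homomorphism `φ : A → ℂ` with `φ (f n) ≠ 0` for all `n`. -/
theorem exists_algHom_nonvanishing_of_countable_dimension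
    (A : Type) [CommRing A] [Algebra ℂ A] [IsDomain A]
    (hcount : ∃ s : Set A, s.Countable ∧ Submodule.span ℂ s = ⊤)
    (f : ℕ → A) (hf : ∀ n, f n ≠ 0) :
    ∃ φ : A →ₐ[ℂ] ℂ, ∀ n, φ (f n) ≠ 0 := by
  classical
  obtain ⟨s, hsc, hsp⟩ := hcount
  -- the multiplicative set generated by the `f n`
  set S : Submonoid A := Submonoid.closure (Set.range f) with hS
  have hS0 : S ≤ nonZeroDivisors A := by
    refine Submonoid.closure_le.2 ?_
    rintro x ⟨n, rfl⟩
    exact mem_nonZeroDivisors_of_ne_zero (hf n)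
  set L := Localization S with hL
  haveI : IsDomain L := IsLocalization.isDomain_localization hS0
  -- `S` is countable
  have hSc : (S : Set A).Countable := by
    rw [hS, Submonoid.closure_eq_image_prod]
    haveI := (Set.countable_range f).to_subtype
    refine Set.Countable.image ?_ _
    rw [← Set.range_list_map_coe]
    exact Set.countable_range _
  haveI : Countable S := hSc.to_subtype
  -- `L` has at most countable dimension over `ℂ`
  have hrankL : Module.rank ℂ L ≤ ℵ₀ := by
    set T : Set L := ⋃ t : S, (fun a => Localization.mk a t) '' s with hT
    have hTc : T.Countable := Set.countable_iUnion fun t => hsc.image _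
    have hTs : Submodule.span ℂ T = ⊤ := by
      rw [Submodule.eq_top_iff']
      intro x
      refine Localization.induction_on x ?_
      rintro ⟨a, t⟩
      let g : A →ₗ[ℂ] L :=
        (LinearMap.mulLeft ℂ (Localization.mk 1 t)).comp
          (IsScalarTower.toAlgHom ℂ A L).toLinearMap
      have hg : ∀ b : A, g b = Localization.mk b t := by
        intro b
        show Localization.mk 1 t * algebraMap A L b = Localization.mk b t
        rw [← Localization.mk_one_eq_algebraMap, Localization.mk_mul, one_mul, mul_one]
      have ha : a ∈ Submodule.span ℂ s := hsp ▸ Submodule.mem_top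
      have := Submodule.apply_mem_span_image_of_mem_span g ha
      rw [hg] at this
      refine Submodule.span_mono ?_ this
      intro y hy
      rcases hy with ⟨b, hb, rfl⟩
      exact Set.mem_iUnion.2 ⟨t, ⟨b, hb, (hg b).symm⟩⟩
    haveI := hTc.to_subtype
    calc Module.rank ℂ L = Module.rank ℂ (⊤ : Submodule ℂ L) := (rank_top ℂ L).symm
      _ = Module.rank ℂ (Submodule.span ℂ T) := by rw [hTs]
      _ ≤ #T := rank_span_le (R := ℂ) T
      _ ≤ ℵ₀ := Cardinal.mk_le_aleph0
  -- choose a maximal ideal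
  obtain ⟨m, hm⟩ := Ideal.exists_maximal L
  set K := L ⧸ m with hK
  haveI : Nontrivial K := Ideal.Quotient.nontrivial_iff.mpr hm.ne_top
  letI : Field K := Ideal.Quotient.field m
  -- `K` has at most countable dimension over `ℂ`
  have hrankK : Module.rank ℂ K ≤ ℵ₀ := by
    refine le_trans ?_ hrankL
    exact LinearMap.rank_le_of_surjective (Ideal.Quotient.mkₐ ℂ m).toLinearMap
      Ideal.Quotient.mk_surjective
  -- `K` is algebraic over `ℂ`, hence `ℂ → K` is bijective
  haveI : Algebra.IsIntegral ℂ K := by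
    refine ⟨fun x => ?_⟩
    rw [← isAlgebraic_iff_isIntegral]
    by_contra hx
    have hli := (Transcendental.linearIndependent_sub_inv (F := ℂ) (E := K) hx)
    have := hli.cardinal_le_rank
    rw [mk_complex] at this
    exact absurd (this.trans hrankK) (by simpa using Cardinal.aleph0_lt_continuum.not_ge)
  have hsurj : Function.Surjective (algebraMap ℂ K) :=
    IsAlgClosed.algebraMap_bijective_of_isIntegral.2
  have hinj : Function.Injective (algebraMap ℂ K) := (algebraMap ℂ K).injective
  let e : ℂ ≃ₐ[ℂ] K := AlgEquiv.ofBijective (Algebra.ofId ℂ K) ⟨hinj, hsurj⟩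
  refine ⟨e.symm.toAlgHom.comp ((Ideal.Quotient.mkₐ ℂ m).comp (IsScalarTower.toAlgHom ℂ A L)), ?_⟩
  intro n
  have hfn : f n ∈ S := Submonoid.subset_closure ⟨n, rfl⟩
  have hu : IsUnit (algebraMap A L (f n)) := IsLocalization.map_units L ⟨f n, hfn⟩
  have hu' : IsUnit (Ideal.Quotient.mk m (algebraMap A L (f n))) :=
    hu.map (Ideal.Quotient.mk m)
  have hne : (Ideal.Quotient.mk m (algebraMap A L (f n))) ≠ 0 := hu'.ne_zero
  simp only [AlgHom.coe_comp, Function.comp_apply, IsScalarTower.coe_toAlgHom',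
    Ideal.Quotient.mkₐ_eq_mk, AlgEquiv.coe_algHom]
  intro h
  apply hne
  have h' : e.symm (Ideal.Quotient.mk m (algebraMap A L (f n))) = 0 := h
  have h2 := congrArg e h'
  rwa [AlgEquiv.apply_symm_apply, map_zero] at h2
end

section
/- Let Ω be a field, let F ⊆ Ω be an algebraically closed subfield, and let K ⊆ Ω be a subfield. Let f, g ∈ K[X] be coprime polynomials with g monic, and suppose there exists a finite subset S ⊆ F such that for every a ∈ F ∖ S one has g(a) ≠ 0 and f(a)/g(a) ∈ F (evaluations and the quotient taken in Ω). Then all coefficients of f and of g lie in the subfield F ∩ K. -/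
open Polynomial Matrix

namespace RatAux

variable {Ω : Type} [Field Ω]

/-- Polynomial with coefficient vector `z`. -/
noncomputable def pw {m : ℕ} (z : Fin m → Ω) : Polynomial Ω :=
  ∑ j : Fin m, Polynomial.C (z j) * Polynomial.X ^ (j : ℕ)

lemma pw_eval {m : ℕ} (z : Fin m → Ω) (x : Ω) :
    (pw z).eval x = ∑ j : Fin m, z j * x ^ (j : ℕ) := by
  simp [pw, Polynomial.eval_finset_sum]

lemma pw_coeff {m : ℕ} (z : Fin m → Ω) (j : Fin m) : (pw z).coeff (j : ℕ) = z j := by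
  classical
  simp only [pw, Polynomial.finset_sum_coeff, Polynomial.coeff_C_mul, Polynomial.coeff_X_pow,
    mul_ite, mul_one, mul_zero]
  rw [Finset.sum_eq_single j]
  · simp
  · intro i _ hij
    exact if_neg fun hh => hij (Fin.val_injective hh).symm
  · simp

lemma pw_natDegree_le {m k : ℕ} (hmk : m ≤ k + 1) (z : Fin m → Ω) :
    (pw z).natDegree ≤ k := by
  apply Polynomial.natDegree_sum_le_of_forall_le
  intro j _
  exact le_trans (Polynomial.natDegree_C_mul_X_pow_le _ _) (by omega)

end RatAux

/-- Let `Ω` be a field, `F ⊆ Ω` a subfield which is algebraically closed as a field, and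
`K ⊆ Ω` a subfield.  Let `f, g ∈ K[X]` be coprime with `g` monic, and suppose there is a finite
subset `S ⊆ F` such that for every `a ∈ F ∖ S` one has `g(a) ≠ 0` and `f(a)/g(a) ∈ F`
(evaluations taken in `Ω`).  Then all coefficients of `f` and of `g` lie in `F ∩ K`. -/
theorem coeffs_mem_of_rational_function_valued_in_subfield
    (Ω : Type) [Field Ω] (F K : Subfield Ω) [IsAlgClosed F]
    (f g : Polynomial K) (hco : IsCoprime f g) (hg : g.Monic)
    (S : Set Ω) (hSfin : S.Finite) (hSF : S ⊆ (F : Set Ω))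
    (h : ∀ a : Ω, a ∈ F → a ∉ S →
      (g.map K.subtype).eval a ≠ 0 ∧
        (f.map K.subtype).eval a / (g.map K.subtype).eval a ∈ F) :
    (∀ i, ((f.coeff i : K) : Ω) ∈ F) ∧ (∀ i, ((g.coeff i : K) : Ω) ∈ F) := by
  classical
  set df := f.natDegree with hdf
  set dg := g.natDegree with hdg
  set Fp := f.map K.subtype with hFp
  set G := g.map K.subtype with hG
  -- distinct points of F avoiding S
  have hTfin : (((↑) : F → Ω) ⁻¹' S).Finite := hSfin.preimage Subtype.val_injective.injOn
  have hTc : ((((↑) : F → Ω) ⁻¹' S)ᶜ).Infinite := hTfin.infinite_compl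
  have : Infinite ↥((((↑) : F → Ω) ⁻¹' S)ᶜ) := hTc.to_subtype
  let e : ℕ ↪ ↥((((↑) : F → Ω) ⁻¹' S)ᶜ) := Infinite.natEmbedding _
  let a : Fin (df + 1) ⊕ Fin dg → F := fun i => (e ((finSumFinEquiv i : Fin (df + 1 + dg)) : ℕ)).1
  have ha_inj : Function.Injective a := by
    intro i j hij
    have := e.injective (Subtype.ext hij)
    exact finSumFinEquiv.injective (Fin.val_injective this)
  have ha_notS : ∀ i, ((a i : F) : Ω) ∉ S := fun i => (e _).2
  have haF : ∀ i, ((a i : F) : Ω) ∈ F := fun i => (a i).2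
  have hGa : ∀ i, G.eval ((a i : F) : Ω) ≠ 0 := fun i => (h _ (haF i) (ha_notS i)).1
  let b : Fin (df + 1) ⊕ Fin dg → F :=
    fun i => ⟨Fp.eval ((a i : F) : Ω) / G.eval ((a i : F) : Ω), (h _ (haF i) (ha_notS i)).2⟩
  have hb : ∀ i, ((b i : F) : Ω) * G.eval ((a i : F) : Ω) = Fp.eval ((a i : F) : Ω) :=
    fun i => div_mul_cancel₀ _ (hGa i)
  -- the matrix and RHS vector over F
  let M' : Matrix (Fin (df + 1) ⊕ Fin dg) (Fin (df + 1) ⊕ Fin dg) F :=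
    fun i => Sum.elim (fun j => a i ^ (j : ℕ)) (fun k => - b i * a i ^ (k : ℕ))
  let v' : Fin (df + 1) ⊕ Fin dg → F := fun i => b i * a i ^ dg
  let M : Matrix (Fin (df + 1) ⊕ Fin dg) (Fin (df + 1) ⊕ Fin dg) Ω := M'.map F.subtype
  have hmap : ∀ w : Fin (df + 1) ⊕ Fin dg → F,
      M.mulVec (fun j => ((w j : F) : Ω)) = fun i => ((M'.mulVec w i : F) : Ω) := by
    intro w
    funext i
    simp only [Matrix.mulVec, dotProduct, M, Matrix.map_apply,
      Subfield.coe_subtype]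
    push_cast
    rfl
  -- kernel triviality over Ω
  have hcop : IsCoprime Fp G := by
    have := IsCoprime.map hco (Polynomial.mapRingHom K.subtype)
    simpa [Polynomial.coe_mapRingHom] using this
  have hGne : G ≠ 0 := (hg.map K.subtype).ne_zero
  have hGdeg : G.natDegree = dg := hg.natDegree_map K.subtype
  have hker : ∀ z : Fin (df + 1) ⊕ Fin dg → Ω, M.mulVec z = 0 → z = 0 := by
    intro z hz
    set p := RatAux.pw (fun j => z (Sum.inl j)) with hp
    set q := RatAux.pw (fun k => z (Sum.inr k)) with hq
    have hrow : ∀ i, p.eval ((a i : F) : Ω) - ((b i : F) : Ω) * q.eval ((a i : F) : Ω) = 0 := by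
      intro i
      have := congrFun hz i
      simp only [Matrix.mulVec, dotProduct, Fintype.sum_sum_type, M, M',
        Matrix.map_apply, Sum.elim_inl, Sum.elim_inr, Pi.zero_apply] at this
      have s1 : ∑ j : Fin (df + 1), z (Sum.inl j) * ((a i : F) : Ω) ^ (j : ℕ) =
          ∑ j : Fin (df + 1), F.subtype (a i ^ (j : ℕ)) * z (Sum.inl j) := by
        refine Finset.sum_congr rfl fun j _ => ?_
        simp only [Subfield.coe_subtype]
        push_cast
        ring
      have s2 : ∑ k : Fin dg, ((b i : F) : Ω) * (z (Sum.inr k) * ((a i : F) : Ω) ^ (k : ℕ)) =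
          -∑ k : Fin dg, F.subtype (-b i * a i ^ (k : ℕ)) * z (Sum.inr k) := by
        rw [← Finset.sum_neg_distrib]
        refine Finset.sum_congr rfl fun k _ => ?_
        simp only [Subfield.coe_subtype]
        push_cast
        ring
      rw [hp, hq, RatAux.pw_eval, RatAux.pw_eval, Finset.mul_sum, s1, s2, sub_neg_eq_add]; exact this
    have hFpa : ∀ i, Fp.eval ((a i : F) : Ω) = ((b i : F) : Ω) * G.eval ((a i : F) : Ω) :=
      fun i => (hb i).symm
    have h0 : p * G - q * Fp = 0 := by
      apply Polynomial.eq_zero_of_natDegree_lt_card_of_eval_eq_zero _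
        (Subtype.val_injective.comp ha_inj)
      · intro i
        have h1 := hrow i
        simp only [Polynomial.eval_sub, Polynomial.eval_mul, Function.comp_apply]
        rw [hFpa i]
        have h2 : p.eval ((a i : F) : Ω) = ((b i : F) : Ω) * q.eval ((a i : F) : Ω) :=
          sub_eq_zero.mp (hrow i)
        rw [h2]; ring
      · have h3 : (p * G - q * Fp).natDegree ≤ df + dg := by
          have hpd : p.natDegree ≤ df := RatAux.pw_natDegree_le le_rfl _
          have hqd : q.natDegree ≤ dg := RatAux.pw_natDegree_le (Nat.le_succ dg) _
          have hFd : Fp.natDegree ≤ df := Polynomial.natDegree_map_le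
          have m1 : (p * G).natDegree ≤ p.natDegree + G.natDegree :=
            Polynomial.natDegree_mul_le
          have m2 : (q * Fp).natDegree ≤ q.natDegree + Fp.natDegree :=
            Polynomial.natDegree_mul_le
          have hsub := Polynomial.natDegree_sub_le (p * G) (q * Fp)
          omega
        have h4 : Fintype.card (Fin (df + 1) ⊕ Fin dg) = df + 1 + dg := by simp
        omega
    have hpq : p * G = q * Fp := by linear_combination h0
    have hGq : G ∣ q := by
      refine hcop.symm.dvd_of_dvd_mul_right ⟨p, ?_⟩
      linear_combination -hpq
    have hq0 : q = 0 := by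
      by_cases hdg0 : dg = 0
      · haveI : IsEmpty (Fin dg) := by rw [hdg0]; infer_instance
        rw [hq, RatAux.pw, Finset.univ_eq_empty, Finset.sum_empty]
      · by_contra hqne
        have h5 := Polynomial.natDegree_le_of_dvd hGq hqne
        have h6 : q.natDegree ≤ dg - 1 := RatAux.pw_natDegree_le (by omega) _
        omega
    have hp0 : p = 0 := by
      rcases mul_eq_zero.mp (by rw [hpq, hq0, zero_mul] : p * G = 0) with h | h
      · exact h
      · exact absurd h hGne
    funext i
    rcases i with j | k
    · have := RatAux.pw_coeff (fun j => z (Sum.inl j)) j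
      rw [← hp, hp0] at this
      simpa using this.symm
    · have := RatAux.pw_coeff (fun k => z (Sum.inr k)) k
      rw [← hq, hq0] at this
      simpa using this.symm
  -- the determinant over F is nonzero
  have hdet : M'.det ≠ 0 := by
    intro hd
    obtain ⟨w, hw, hMw⟩ := (Matrix.exists_mulVec_eq_zero_iff).mpr hd
    apply hw
    have h7 : M.mulVec (fun j => ((w j : F) : Ω)) = 0 := by
      rw [hmap w, hMw]
      funext i; simp
    have h8 := hker _ h7
    funext j
    exact Subtype.ext (by simpa using congrFun h8 j)
  -- solve the system over F
  let z' : Fin (df + 1) ⊕ Fin dg → F := M'⁻¹.mulVec v'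
  have hz' : M'.mulVec z' = v' := by
    show M'.mulVec (M'⁻¹.mulVec v') = v'
    rw [Matrix.mulVec_mulVec, Matrix.mul_nonsing_inv _ (isUnit_iff_ne_zero.mpr hdet),
      Matrix.one_mulVec]
  -- the true coefficient vector solves the same system over Ω
  let x : Fin (df + 1) ⊕ Fin dg → Ω :=
    Sum.elim (fun j => ((f.coeff (j : ℕ) : K) : Ω)) (fun k => ((g.coeff (k : ℕ) : K) : Ω))
  have hx : M.mulVec x = fun i => ((v' i : F) : Ω) := by
    funext i
    set x0 : Ω := ((a i : F) : Ω) with hx0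
    have claim1 : ∑ j : Fin (df + 1), x0 ^ (j : ℕ) * ((f.coeff (j : ℕ) : K) : Ω)
        = Fp.eval x0 := by
      rw [Polynomial.eval_eq_sum_range' (lt_of_le_of_lt Polynomial.natDegree_map_le
        (by omega : f.natDegree < df + 1)) x0, ← Fin.sum_univ_eq_sum_range]
      exact Finset.sum_congr rfl fun j _ => by
        rw [Polynomial.coeff_map]; simp [mul_comm]
    have claim2 : ∑ k : Fin dg, x0 ^ (k : ℕ) * ((g.coeff (k : ℕ) : K) : Ω)
        = G.eval x0 - x0 ^ dg := by
      rw [Polynomial.eval_eq_sum_range' (lt_of_le_of_lt Polynomial.natDegree_map_le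
        (by omega : g.natDegree < dg + 1)) x0, Finset.sum_range_succ, ← Fin.sum_univ_eq_sum_range]
      have h9 : G.coeff dg = 1 := by
        rw [hG, hdg, Polynomial.coeff_map, hg.coeff_natDegree, RingHom.map_one]
      rw [h9, one_mul]
      rw [add_sub_cancel_right]
      exact Finset.sum_congr rfl fun k _ => by
        rw [show G = Polynomial.map K.subtype g from hG] at *; rw [Polynomial.coeff_map]; simp [mul_comm]
    simp only [Matrix.mulVec, dotProduct, Fintype.sum_sum_type, M, M',
      Matrix.map_apply, Sum.elim_inl, Sum.elim_inr, x, v', Subfield.coe_subtype]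
    simp only [Matrix.map, Matrix.of_apply, Sum.elim_inl, Sum.elim_inr]
    push_cast
    have e1 : ∑ j : Fin (df + 1), (((a i : F) : Ω)) ^ (j : ℕ) * ((f.coeff (j : ℕ) : K) : Ω)
        = Fp.eval x0 := claim1
    have e2 : ∑ k : Fin dg, -(((b i : F) : Ω)) * ((a i : F) : Ω) ^ (k : ℕ)
          * ((g.coeff (k : ℕ) : K) : Ω)
        = -(((b i : F) : Ω)) * (G.eval x0 - x0 ^ dg) := by
      rw [← claim2, Finset.mul_sum]
      exact Finset.sum_congr rfl fun k _ => by rw [hx0]; ring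
    rw [e1, e2]
    have hGa' : G.eval x0 ≠ 0 := hGa i
    rw [hx0] at hGa' ⊢
    field_simp [hGa']
    linear_combination -(hb i)
  -- uniqueness identifies the two solutions
  have hfin : x = fun j => ((z' j : F) : Ω) := by
    have h10 : M.mulVec (x - fun j => ((z' j : F) : Ω)) = 0 := by
      rw [Matrix.mulVec_sub, hx, hmap z', hz']
      funext i; simp
    have h11 := hker _ h10
    funext j
    have := congrFun h11 j
    simp only [Pi.sub_apply, Pi.zero_apply, sub_eq_zero] at this
    exact this
  constructor
  · intro i
    by_cases hi : i < df + 1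
    · have := congrFun hfin (Sum.inl ⟨i, hi⟩)
      simp only [x, Sum.elim_inl] at this
      rw [this]
      exact (z' _).2
    · have hz : f.coeff i = 0 := f.coeff_eq_zero_of_natDegree_lt (by omega)
      simp only [hz]
      simpa using F.zero_mem
  · intro i
    rcases lt_trichotomy i dg with hi | hi | hi
    · have := congrFun hfin (Sum.inr ⟨i, hi⟩)
      simp only [x, Sum.elim_inr] at this
      rw [this]
      exact (z' _).2
    · subst hi
      rw [hdg, hg.coeff_natDegree]
      simpa using F.one_mem
    · have hz : g.coeff i = 0 := g.coeff_eq_zero_of_natDegree_lt (by omega)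
      simp only [hz]
      simpa using F.zero_mem
end

section
/- Fix n ≥ 1 and consider n×n complex matrices with rows and columns indexed by 1, …, n. Let f be strictly lower triangular (f_{rs} = 0 whenever r ≤ s) and let g be upper triangular with all diagonal entries equal to 1 (so g is invertible). Then for all indices 1 ≤ i < j ≤ n, the submatrix of g f g^{-1} formed by the rows j, j+1, …, n and the columns 1, …, i has the same rank as the submatrix of f formed by the same rows and columns. -/
open Matrix Finset

private lemma sum_restrict_aux {n : ℕ} (p : Fin n → Prop) [DecidablePred p] (F : Fin n → ℂ)
    (h : ∀ x, ¬ p x → F x = 0) : ∑ x, F x = ∑ x : Subtype p, F x.val := by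
  rw [← Finset.sum_subtype (Finset.univ.filter p) (by simp) F]
  exact (Finset.sum_filter_of_ne (fun x _ hx => by
    by_contra hp; exact hx (h x hp))).symm

/-- **Invariance of Kirillov's rank invariants under the coadjoint action.**
Let `f` be a strictly lower triangular `n × n` complex matrix and `g` an upper triangular
matrix with all diagonal entries equal to `1` (hence invertible).  For all indices `i < j`,
the submatrix of `g * f * g⁻¹` formed by the rows `j, j+1, …, n` and the columns `1, …, i`
has the same rank as the corresponding submatrix of `f`. -/
theorem rank_southwest_submatrix_conj_invariant
    (n : ℕ) (f g : Matrix (Fin n) (Fin n) ℂ)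
    (hf : ∀ r s : Fin n, r ≤ s → f r s = 0)
    (hg : ∀ r s : Fin n, s < r → g r s = 0)
    (hgdiag : ∀ r : Fin n, g r r = 1)
    (i j : Fin n) (hij : i < j) :
    ((g * f * g⁻¹).submatrix
        (fun r : {r : Fin n // j ≤ r} => (r : Fin n))
        (fun c : {c : Fin n // c ≤ i} => (c : Fin n))).rank
      = (f.submatrix
        (fun r : {r : Fin n // j ≤ r} => (r : Fin n))
        (fun c : {c : Fin n // c ≤ i} => (c : Fin n))).rank := by
  classical
  have hgBT : g.BlockTriangular id := fun r s h => hg r s h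
  have hdetg : g.det = 1 := by
    rw [Matrix.det_of_upperTriangular hgBT]
    simp [hgdiag]
  have hunit : IsUnit g.det := by simp [hdetg]
  haveI : Invertible g := g.invertibleOfIsUnitDet hunit
  have hinvBT : g⁻¹.BlockTriangular id :=
    Matrix.blockTriangular_inv_of_blockTriangular hgBT
  have hinvdiag : ∀ r : Fin n, g⁻¹ r r = 1 := by
    intro r
    have h1 : (g * g⁻¹) r r = 1 := by
      rw [Matrix.mul_nonsing_inv g hunit, Matrix.one_apply_eq]
    rw [Matrix.mul_apply, Finset.sum_eq_single r ?h1 (by simp)] at h1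
    · rwa [hgdiag, one_mul] at h1
    case h1 =>
      intro s _ hs
      rcases lt_or_gt_of_ne hs with h | h
      · rw [hg r s h, zero_mul]
      · rw [hinvBT h, mul_zero]
  set G₁ : Matrix {r : Fin n // j ≤ r} {r : Fin n // j ≤ r} ℂ :=
    g.submatrix Subtype.val Subtype.val with hG₁
  set G₂ : Matrix {c : Fin n // c ≤ i} {c : Fin n // c ≤ i} ℂ :=
    (g⁻¹).submatrix Subtype.val Subtype.val with hG₂
  set F : Matrix {r : Fin n // j ≤ r} {c : Fin n // c ≤ i} ℂ :=
    f.submatrix Subtype.val Subtype.val with hF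
  have key : (g * f * g⁻¹).submatrix
      (fun r : {r : Fin n // j ≤ r} => (r : Fin n))
      (fun c : {c : Fin n // c ≤ i} => (c : Fin n)) = G₁ * F * G₂ := by
    ext a b
    simp only [Matrix.submatrix_apply, Matrix.mul_apply, hG₁, hG₂, hF,
      Finset.sum_mul, Finset.mul_sum]
    rw [sum_restrict_aux (fun t => t ≤ i)
      (fun t => ∑ s, g a.val s * f s t * g⁻¹ t b.val) ?ht]
    · refine Finset.sum_congr rfl fun t _ => ?_
      exact sum_restrict_aux (fun s => j ≤ s)
        (fun s => g a.val s * f s t.val * g⁻¹ t.val b.val) (fun s hs => by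
          show g a.val s * f s t.val * g⁻¹ t.val b.val = 0
          rw [hg a.val s (lt_of_not_ge fun h => hs (le_trans a.2 h)), zero_mul, zero_mul])
    case ht =>
      intro t ht
      refine Finset.sum_eq_zero fun s _ => ?_
      rw [hinvBT (lt_of_le_of_lt b.2 (lt_of_not_ge ht)), mul_zero]
  rw [key]
  have hdG₁ : IsUnit G₁.det := by
    have : G₁.BlockTriangular id := fun a b h => hg a.val b.val h
    rw [Matrix.det_of_upperTriangular this]
    simp [hG₁, hgdiag]
  have hdG₂ : IsUnit G₂.det := by
    have : G₂.BlockTriangular id := fun a b h => hinvBT h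
    rw [Matrix.det_of_upperTriangular this]
    simp [hG₂, hinvdiag]
  rw [Matrix.rank_mul_eq_left_of_isUnit_det G₂ (G₁ * F) hdG₂,
    Matrix.rank_mul_eq_right_of_isUnit_det G₁ F hdG₁]
end
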